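/- (Depth-1 Sakugawa–Seki / generalized Euler) For a positive integer s, a variable t, and n ≥ 1: ∑_{m=1}^n (-1)^m C(n,m) t^m / m^s = ∑_{n ≥ n_1 ≥ ... ≥ n_s ≥ 1} ((1-t)^{n_s} - 1)/(n_1 ··· n_s). -/

import Mathlib

/-- Weakly decreasing chains `hi ≥ f 0 ≥ f 1 ≥ ⋯ ≥ f (d-1) ≥ lo`. -/
def chainsIcc (d lo hi : ℕ) : Finset (Fin d → ℕ) :=
  (Fintype.piFinset fun _ : Fin d => Finset.Icc lo hi).filter
    fun f => ∀ i j : Fin d, i ≤ j → f j ≤ f i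

/-- `idx f j` is the paper's `n_j` (1-indexed entry of the chain `f`). -/
def idx {w : ℕ} (f : Fin w → ℕ) (j : ℕ) : ℕ :=
  if h : j - 1 < w then f ⟨j - 1, h⟩ else 0

lemma mem_chainsIcc {d lo hi : ℕ} {f : Fin d → ℕ} :
    f ∈ chainsIcc d lo hi ↔
      (∀ i, lo ≤ f i ∧ f i ≤ hi) ∧ ∀ i j : Fin d, i ≤ j → f j ≤ f i := by
  simp [chainsIcc, Fintype.mem_piFinset, Finset.mem_Icc]

lemma idx_succ {w : ℕ} (f : Fin w → ℕ) (j : ℕ) (h : j < w) :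
    idx f (j + 1) = f ⟨j, h⟩ := by
  simp only [idx, Nat.add_sub_cancel]
  rw [dif_pos h]

lemma idx_tail {w : ℕ} (f : Fin (w + 1) → ℕ) (j : ℕ) (h : j < w) :
    idx (Fin.tail f) (j + 1) = idx f (j + 1 + 1) := by
  rw [idx_succ _ j h, idx_succ _ (j + 1) (by omega)]
  rfl

section
variable {A : Type*} [CommRing A] [Algebra ℚ A] (t : A)

lemma chains_one (n : ℕ) :
    ∑ f ∈ chainsIcc 1 1 n,
        (∏ j ∈ Finset.range 1, (idx f (j + 1) : ℚ))⁻¹ • ((1 - t) ^ (idx f 1) - 1)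
      = ∑ k ∈ Finset.Icc 1 n, ((k : ℚ))⁻¹ • ((1 - t) ^ k - 1) := by
  refine Finset.sum_bij' (fun f _ => f 0) (fun k _ => fun _ => k) ?_ ?_ ?_ ?_ ?_
  · intro f hf
    have := (mem_chainsIcc.mp hf).1 0
    simp [Finset.mem_Icc, this]
  · intro k hk
    rw [mem_chainsIcc]
    have := Finset.mem_Icc.mp hk
    exact ⟨fun _ => this, fun _ _ _ => le_refl _⟩
  · intro f _
    funext i
    have : i = 0 := Subsingleton.elim i 0
    rw [this]
  · intro k _
    rfl
  · intro f _
    rw [Finset.prod_range_one, idx_succ f 0 (by omega)]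
    rfl

lemma chains_decomp (s : ℕ) (hs : 1 ≤ s) (n : ℕ) :
    ∑ f ∈ chainsIcc (s + 1) 1 n,
        (∏ j ∈ Finset.range (s + 1), (idx f (j + 1) : ℚ))⁻¹ • ((1 - t) ^ (idx f (s + 1)) - 1)
      = ∑ k ∈ Finset.Icc 1 n, ((k : ℚ))⁻¹ •
          ∑ g ∈ chainsIcc s 1 k,
            (∏ j ∈ Finset.range s, (idx g (j + 1) : ℚ))⁻¹ • ((1 - t) ^ (idx g s) - 1) := by
  obtain ⟨s, rfl⟩ : ∃ s', s = s' + 1 := ⟨s - 1, by omega⟩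
  rw [← Finset.sum_fiberwise_of_maps_to (g := fun f : Fin (s + 2) → ℕ => f 0)
      (t := Finset.Icc 1 n) (fun f hf => by
        have := (mem_chainsIcc.mp hf).1 0
        simp [Finset.mem_Icc, this])]
  refine Finset.sum_congr rfl fun k hk => ?_
  rw [Finset.smul_sum]
  obtain ⟨hk1, hkn⟩ := Finset.mem_Icc.mp hk
  refine Finset.sum_bij' (fun f _ => Fin.tail f) (fun g _ => Fin.cons k g) ?_ ?_ ?_ ?_ ?_
  · intro f hf
    rw [Finset.mem_filter] at hf
    obtain ⟨hf, hf0⟩ := hf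
    rw [mem_chainsIcc] at hf ⊢
    refine ⟨fun i => ⟨(hf.1 i.succ).1, ?_⟩, fun i j hij => hf.2 i.succ j.succ (by
      simpa [Fin.succ_le_succ_iff] using hij)⟩
    have := hf.2 0 i.succ (Fin.zero_le _)
    rw [hf0] at this
    exact this
  · intro g hg
    rw [mem_chainsIcc] at hg
    rw [Finset.mem_filter, mem_chainsIcc]
    refine ⟨⟨fun i => ?_, fun i j hij => ?_⟩, Fin.cons_zero _ _⟩
    · rcases Fin.eq_zero_or_eq_succ i with rfl | ⟨i', rfl⟩
      · simpa using ⟨hk1, hkn⟩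
      · simp only [Fin.cons_succ]
        exact ⟨(hg.1 i').1, le_trans (hg.1 i').2 hkn⟩
    · rcases Fin.eq_zero_or_eq_succ j with rfl | ⟨j', rfl⟩
      · have : i = 0 := le_antisymm (le_trans hij (le_refl _)) (Fin.zero_le i)
        simp [this]
      · rcases Fin.eq_zero_or_eq_succ i with rfl | ⟨i', rfl⟩
        · simp only [Fin.cons_succ, Fin.cons_zero]
          exact (hg.1 j').2
        · simp only [Fin.cons_succ]
          exact hg.2 i' j' (by simpa [Fin.succ_le_succ_iff] using hij)
  · intro f hf
    rw [Finset.mem_filter] at hf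
    have h2 := Fin.cons_self_tail f
    rw [hf.2] at h2
    exact h2
  · intro g _
    exact Fin.tail_cons _ _
  · intro f hf
    rw [Finset.mem_filter] at hf
    obtain ⟨_, hf0⟩ := hf
    have hp : ∏ j ∈ Finset.range (s + 2), (idx f (j + 1) : ℚ)
        = (k : ℚ) * ∏ j ∈ Finset.range (s + 1), (idx (Fin.tail f) (j + 1) : ℚ) := by
      rw [Finset.prod_range_succ' (fun j => (idx f (j + 1) : ℚ)) (s + 1)]
      rw [mul_comm]
      congr 1
      · rw [idx_succ f 0 (by omega)]
        exact_mod_cast hf0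
      · refine Finset.prod_congr rfl fun j hj => ?_
        rw [idx_tail f j (Finset.mem_range.mp hj)]
    rw [hp, mul_inv, mul_smul, idx_tail f s (by omega)]
end


lemma sum_choose_div (m : ℕ) (hm : 1 ≤ m) (n : ℕ) :
    ∑ k ∈ Finset.Icc m n, (k.choose m : ℚ) / k = (n.choose m : ℚ) / m := by
  induction n with
  | zero =>
      rw [Finset.Icc_eq_empty (by omega), Nat.choose_eq_zero_of_lt (by omega)]
      simp
  | succ n ih =>
      by_cases h : m ≤ n + 1
      · rw [Finset.sum_Icc_succ_top h, ih]
        have key : ((n+1 : ℕ) : ℚ) * (n.choose (m-1) : ℚ) = ((n+1).choose m : ℚ) * m := by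
          have := Nat.add_one_mul_choose_eq n (m-1)
          simp only [Nat.succ_eq_add_one, Nat.sub_add_cancel hm] at this
          exact_mod_cast congrArg (Nat.cast : ℕ → ℚ) this
        have pascal : ((n+1).choose m : ℚ) = (n.choose (m-1) : ℚ) + (n.choose m : ℚ) := by
          have : (n+1).choose ((m-1)+1) = n.choose (m-1) + n.choose ((m-1)+1) :=
            Nat.choose_succ_succ n (m-1)
          rw [Nat.sub_add_cancel hm] at this
          exact_mod_cast this
        have hm0 : (m : ℚ) ≠ 0 := by positivity
        have hn0 : ((n+1 : ℕ) : ℚ) ≠ 0 := by positivity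
        push_cast at key pascal hn0 ⊢
        field_simp
        linear_combination -key - ((n:ℚ)+1) * pascal
      · rw [Finset.Icc_eq_empty (by omega), Nat.choose_eq_zero_of_lt (by omega)]
        simp

section
variable {A : Type*} [CommRing A] [Algebra ℚ A] (t : A)

lemma expand_pow (k : ℕ) :
    (1 - t) ^ k - 1
      = ∑ m ∈ Finset.Icc 1 k, (((-1 : ℚ) ^ m * (k.choose m : ℚ)) * ((m : ℚ) ^ 0)⁻¹) • t ^ m := by
  have h1 : (1 - t) ^ k = ∑ m ∈ Finset.range (k+1),
      (((-1 : ℚ) ^ m * (k.choose m : ℚ))) • t ^ m := by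
    have : (1 - t) ^ k = (-t + 1) ^ k := by ring
    rw [this, add_pow]
    refine Finset.sum_congr rfl fun m hm => ?_
    have : (-t) ^ m = ((-1 : ℚ) ^ m) • t ^ m := by
      rw [← neg_one_smul ℚ t, smul_pow]
    rw [this, one_pow, mul_one, smul_mul_assoc, mul_comm (t ^ m), mul_smul]
    congr 1
    rw [Algebra.smul_def, map_natCast]
  have h2 : Finset.range (k+1) = insert 0 (Finset.Icc 1 k) := by
    ext x
    simp [Finset.mem_range, Finset.mem_Icc, Finset.mem_insert]
    omega
  rw [h1, h2, Finset.sum_insert (by simp)]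
  simp

end

section
variable {A : Type*} [CommRing A] [Algebra ℚ A] (t : A)

lemma swap_step (s n : ℕ) :
    ∑ m ∈ Finset.Icc 1 n, (((-1 : ℚ) ^ m * (n.choose m : ℚ)) * ((m : ℚ) ^ (s+1))⁻¹) • t ^ m
      = ∑ k ∈ Finset.Icc 1 n, ((k : ℚ))⁻¹ •
          ∑ m ∈ Finset.Icc 1 k, (((-1 : ℚ) ^ m * (k.choose m : ℚ)) * ((m : ℚ) ^ s)⁻¹) • t ^ m := by
  symm
  calc ∑ k ∈ Finset.Icc 1 n, ((k : ℚ))⁻¹ •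
          ∑ m ∈ Finset.Icc 1 k, (((-1 : ℚ) ^ m * (k.choose m : ℚ)) * ((m : ℚ) ^ s)⁻¹) • t ^ m
      = ∑ k ∈ Finset.Icc 1 n, ∑ m ∈ Finset.Icc 1 n,
          ((k : ℚ)⁻¹ * (((-1 : ℚ) ^ m * (k.choose m : ℚ)) * ((m : ℚ) ^ s)⁻¹)) • t ^ m := by
        refine Finset.sum_congr rfl fun k hk => ?_
        rw [Finset.smul_sum]
        simp only [smul_smul]
        refine Finset.sum_subset (Finset.Icc_subset_Icc_right (Finset.mem_Icc.mp hk).2) ?_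
        intro m hmn hmk
        have : k < m := by
          have := Finset.mem_Icc.mp hmn
          simp only [Finset.mem_Icc] at hmk
          omega
        rw [Nat.choose_eq_zero_of_lt this]
        simp
    _ = ∑ m ∈ Finset.Icc 1 n, ∑ k ∈ Finset.Icc 1 n,
          ((k : ℚ)⁻¹ * (((-1 : ℚ) ^ m * (k.choose m : ℚ)) * ((m : ℚ) ^ s)⁻¹)) • t ^ m :=
        Finset.sum_comm
    _ = ∑ m ∈ Finset.Icc 1 n, (((-1 : ℚ) ^ m * (n.choose m : ℚ)) * ((m : ℚ) ^ (s+1))⁻¹) • t ^ m := by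
        refine Finset.sum_congr rfl fun m hm => ?_
        obtain ⟨hm1, hmn⟩ := Finset.mem_Icc.mp hm
        rw [← Finset.sum_smul]
        congr 1
        have hrestrict : ∑ k ∈ Finset.Icc m n,
              ((k : ℚ)⁻¹ * (((-1 : ℚ) ^ m * (k.choose m : ℚ)) * ((m : ℚ) ^ s)⁻¹))
            = ∑ k ∈ Finset.Icc 1 n,
              ((k : ℚ)⁻¹ * (((-1 : ℚ) ^ m * (k.choose m : ℚ)) * ((m : ℚ) ^ s)⁻¹)) := by
          refine Finset.sum_subset (Finset.Icc_subset_Icc_left hm1) ?_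
          intro k hkn hkm
          have : k < m := by
            have := Finset.mem_Icc.mp hkn
            simp only [Finset.mem_Icc] at hkm
            omega
          rw [Nat.choose_eq_zero_of_lt this]
          simp
        rw [← hrestrict]
        have step : ∀ k ∈ Finset.Icc m n,
            ((k : ℚ)⁻¹ * (((-1 : ℚ) ^ m * (k.choose m : ℚ)) * ((m : ℚ) ^ s)⁻¹))
              = ((-1 : ℚ) ^ m * ((m : ℚ) ^ s)⁻¹) * ((k.choose m : ℚ) / k) := by
          intro k _
          rw [div_eq_mul_inv]
          ring
        rw [Finset.sum_congr rfl step, ← Finset.mul_sum, sum_choose_div m hm1 n]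
        have hm0 : (m : ℚ) ≠ 0 := by positivity
        rw [pow_succ, mul_inv]
        field_simp
end


lemma main_identity {A : Type*} [CommRing A] [Algebra ℚ A] (t : A) :
    ∀ s : ℕ, 1 ≤ s → ∀ n : ℕ,
    ∑ m ∈ Finset.Icc 1 n, (((-1 : ℚ) ^ m * (n.choose m : ℚ)) * ((m : ℚ) ^ s)⁻¹) • t ^ m
      = ∑ f ∈ chainsIcc s 1 n,
          (∏ j ∈ Finset.range s, (idx f (j + 1) : ℚ))⁻¹ • ((1 - t) ^ (idx f s) - 1) := by
  intro s hs
  induction s, hs using Nat.le_induction with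
  | base =>
      intro n
      rw [chains_one t n]
      have h0 := swap_step t 0 n
      norm_num at h0 ⊢
      rw [h0]
      refine Finset.sum_congr rfl fun k _ => ?_
      have he := expand_pow t k
      norm_num at he
      rw [← he]
  | succ s hs ih =>
      intro n
      rw [chains_decomp t s hs n]
      rw [swap_step t s n]
      exact Finset.sum_congr rfl fun k _ => by rw [ih k]

theorem depth_one_sakugawa_seki {A : Type*} [CommRing A] [Algebra ℚ A]
    (s : ℕ) (hs : 1 ≤ s) (t : A) (n : ℕ) (hn : 1 ≤ n) :
    ∑ m ∈ Finset.Icc 1 n, (((-1 : ℚ) ^ m * (n.choose m : ℚ)) * ((m : ℚ) ^ s)⁻¹) • t ^ m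
      = ∑ f ∈ chainsIcc s 1 n,
          (∏ j ∈ Finset.range s, (idx f (j + 1) : ℚ))⁻¹ • ((1 - t) ^ (idx f s) - 1) := by
  exact main_identity t s hs n
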